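/- arXiv:1512.08161 — 4 statements merged into one kernel-verified Lean document; each statement's English description precedes it below -/
import Mathlib

section
/- For the cost c(x,y) = 1/|x−y|², for distinct points y₁, y₂ ∈ ℝ^d and a ≥ 0, let ψ(x) = |x−y₂|⁻² − |x−y₁|⁻² − a on ℝ^d ∖ {y₁, y₂}. Then at any point x of the level set {ψ = 0}, for every unit vector τ orthogonal to ∇ψ(x), one has ∂²_{ττ}ψ(x) ≤ 0. -/
lemma hasDerivAt_quad (A B t : ℝ) :
    HasDerivAt (fun t : ℝ => A + B * t + t ^ 2) (B + 2 * t) t := by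
  have h := ((hasDerivAt_const t A).fun_add ((hasDerivAt_id t).const_mul B)).fun_add
    (hasDerivAt_pow 2 t)
  exact h.congr_deriv (by norm_num)

lemma second_deriv_rat (A₁ A₂ B₁ B₂ a : ℝ) (h1 : A₁ ≠ 0) (h2 : A₂ ≠ 0) :
    deriv (deriv (fun t : ℝ =>
      (A₂ + B₂ * t + t ^ 2)⁻¹ - (A₁ + B₁ * t + t ^ 2)⁻¹ - a)) 0
    = (-2 / A₂ ^ 2 + 2 * B₂ ^ 2 / A₂ ^ 3) - (-2 / A₁ ^ 2 + 2 * B₁ ^ 2 / A₁ ^ 3) := by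
  set q₁ : ℝ → ℝ := fun t => A₁ + B₁ * t + t ^ 2 with hq₁
  set q₂ : ℝ → ℝ := fun t => A₂ + B₂ * t + t ^ 2 with hq₂
  have hc₁ : Continuous q₁ := by fun_prop
  have hc₂ : Continuous q₂ := by fun_prop
  have h10 : q₁ 0 = A₁ := by simp [hq₁]
  have h20 : q₂ 0 = A₂ := by simp [hq₂]
  have hne : ∀ᶠ t in nhds (0:ℝ), q₁ t ≠ 0 ∧ q₂ t ≠ 0 := by
    have e1 : ∀ᶠ t in nhds (0:ℝ), q₁ t ≠ 0 :=
      hc₁.continuousAt.eventually_ne (by rw [h10]; exact h1)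
    have e2 : ∀ᶠ t in nhds (0:ℝ), q₂ t ≠ 0 :=
      hc₂.continuousAt.eventually_ne (by rw [h20]; exact h2)
    exact e1.and e2
  have hDF : ∀ t : ℝ, q₁ t ≠ 0 → q₂ t ≠ 0 →
      HasDerivAt (fun t : ℝ => (q₂ t)⁻¹ - (q₁ t)⁻¹ - a)
        (-(B₂ + 2 * t) / (q₂ t) ^ 2 - -(B₁ + 2 * t) / (q₁ t) ^ 2) t := by
    intro t ht1 ht2
    have d2 := (hasDerivAt_quad A₂ B₂ t).inv ht2
    have d1 := (hasDerivAt_quad A₁ B₁ t).inv ht1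
    exact ((d2.sub d1).sub_const a)
  have heq : deriv (fun t : ℝ => (q₂ t)⁻¹ - (q₁ t)⁻¹ - a)
      =ᶠ[nhds (0:ℝ)] fun t => -(B₂ + 2 * t) / (q₂ t) ^ 2 - -(B₁ + 2 * t) / (q₁ t) ^ 2 := by
    filter_upwards [hne] with t ht
    exact (hDF t ht.1 ht.2).deriv
  rw [heq.deriv_eq]
  have dnum₂ : HasDerivAt (fun t : ℝ => -(B₂ + 2 * t)) (-2) 0 := by
    have := ((hasDerivAt_const (0:ℝ) B₂).fun_add ((hasDerivAt_id (0:ℝ)).const_mul 2)).fun_neg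
    exact this.congr_deriv (by ring)
  have dnum₁ : HasDerivAt (fun t : ℝ => -(B₁ + 2 * t)) (-2) 0 := by
    have := ((hasDerivAt_const (0:ℝ) B₁).fun_add ((hasDerivAt_id (0:ℝ)).const_mul 2)).fun_neg
    exact this.congr_deriv (by ring)
  have dden₂ : HasDerivAt (fun t : ℝ => (q₂ t) ^ 2) (2 * q₂ 0 ^ 1 * (B₂ + 2 * 0)) 0 := by
    simpa [hq₂] using ((hasDerivAt_quad A₂ B₂ 0).fun_pow 2)
  have dden₁ : HasDerivAt (fun t : ℝ => (q₁ t) ^ 2) (2 * q₁ 0 ^ 1 * (B₁ + 2 * 0)) 0 := by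
    simpa [hq₁] using ((hasDerivAt_quad A₁ B₁ 0).fun_pow 2)
  have hA2 : (q₂ 0) ^ 2 ≠ 0 := pow_ne_zero _ (by rw [h20]; exact h2)
  have hA1 : (q₁ 0) ^ 2 ≠ 0 := pow_ne_zero _ (by rw [h10]; exact h1)
  have d2 := dnum₂.fun_div dden₂ hA2
  have d1 := dnum₁.fun_div dden₁ hA1
  rw [(d2.fun_sub d1).deriv]
  rw [h10, h20]
  field_simp
  ring

/-- For ψ(x) = |x−y₂|⁻² − |x−y₁|⁻² − a with a ≥ 0, at any point of {ψ = 0},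
the second derivative of ψ in a unit direction τ orthogonal to ∇ψ(x) is ≤ 0. -/
theorem sublevel_tangential_hessian_nonpos {d : ℕ}
    (y₁ y₂ x τ : EuclideanSpace ℝ (Fin d)) (a : ℝ)
    (hy : y₁ ≠ y₂) (ha : 0 ≤ a) (hx1 : x ≠ y₁) (hx2 : x ≠ y₂)
    (hψ0 : (‖x - y₂‖ ^ 2)⁻¹ - (‖x - y₁‖ ^ 2)⁻¹ - a = 0)
    (hτ : ‖τ‖ = 1)
    (horth : (inner ℝ τ ((2 / ‖x - y₁‖ ^ 4) • (x - y₁) - (2 / ‖x - y₂‖ ^ 4) • (x - y₂)) : ℝ) = 0) :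
    deriv (deriv (fun t : ℝ =>
      (‖x + t • τ - y₂‖ ^ 2)⁻¹ - (‖x + t • τ - y₁‖ ^ 2)⁻¹ - a)) 0 ≤ 0 := by
  have hv1 : x - y₁ ≠ 0 := sub_ne_zero.mpr hx1
  have hv2 : x - y₂ ≠ 0 := sub_ne_zero.mpr hx2
  set A₁ : ℝ := ‖x - y₁‖ ^ 2 with hA₁def
  set A₂ : ℝ := ‖x - y₂‖ ^ 2 with hA₂def
  set c₁ : ℝ := inner ℝ τ (x - y₁) with hc₁def
  set c₂ : ℝ := inner ℝ τ (x - y₂) with hc₂def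
  have hA₁pos : 0 < A₁ := pow_pos (norm_pos_iff.mpr hv1) 2
  have hA₂pos : 0 < A₂ := pow_pos (norm_pos_iff.mpr hv2) 2
  -- rewrite the function as an explicit rational function of t
  have key : ∀ (y : EuclideanSpace ℝ (Fin d)) (t : ℝ),
      ‖x + t • τ - y‖ ^ 2 = ‖x - y‖ ^ 2 + (2 * (inner ℝ τ (x - y) : ℝ)) * t + t ^ 2 := by
    intro y t
    rw [add_sub_right_comm, norm_add_sq_real, real_inner_smul_right, real_inner_comm,
      norm_smul, hτ]
    simp only [Real.norm_eq_abs, mul_one, mul_pow, sq_abs]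
    ring
  have hf : (fun t : ℝ =>
        (‖x + t • τ - y₂‖ ^ 2)⁻¹ - (‖x + t • τ - y₁‖ ^ 2)⁻¹ - a)
      = fun t : ℝ => (A₂ + (2 * c₂) * t + t ^ 2)⁻¹ - (A₁ + (2 * c₁) * t + t ^ 2)⁻¹ - a := by
    funext t
    rw [key y₁ t, key y₂ t]
  rw [hf, second_deriv_rat A₁ A₂ (2 * c₁) (2 * c₂) a hA₁pos.ne' hA₂pos.ne']
  -- extract the algebraic facts
  have hle : A₂ ≤ A₁ := by
    have hinv : A₁⁻¹ ≤ A₂⁻¹ := by linarith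
    have h := mul_le_mul_of_nonneg_left hinv (mul_pos hA₁pos hA₂pos).le
    have e1 : A₁ * A₂ * A₁⁻¹ = A₂ := by field_simp
    have e2 : A₁ * A₂ * A₂⁻¹ = A₁ := by field_simp
    rw [e1, e2] at h
    exact h
  have h4₁ : ‖x - y₁‖ ^ 4 = A₁ ^ 2 := by rw [hA₁def]; ring
  have h4₂ : ‖x - y₂‖ ^ 4 = A₂ ^ 2 := by rw [hA₂def]; ring
  rw [inner_sub_right, real_inner_smul_right, real_inner_smul_right, h4₁, h4₂,
    ← hc₁def, ← hc₂def] at horth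
  have hrel : c₁ * A₂ ^ 2 = c₂ * A₁ ^ 2 := by
    field_simp at horth
    linarith
  have hrel2 : (c₁ * A₂ ^ 2) ^ 2 = (c₂ * A₁ ^ 2) ^ 2 := by rw [hrel]
  -- final inequality
  have hEq : (-2 / A₂ ^ 2 + 2 * (2 * c₂) ^ 2 / A₂ ^ 3) - (-2 / A₁ ^ 2 + 2 * (2 * c₁) ^ 2 / A₁ ^ 3)
      = (-2 * A₂ * A₁ ^ 3 + 8 * c₂ ^ 2 * A₁ ^ 3 + 2 * A₁ * A₂ ^ 3 - 8 * c₁ ^ 2 * A₂ ^ 3)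
        / (A₁ ^ 3 * A₂ ^ 3) := by
    field_simp
    ring
  rw [hEq]
  have hN : -2 * A₂ * A₁ ^ 3 + 8 * c₂ ^ 2 * A₁ ^ 3 + 2 * A₁ * A₂ ^ 3 - 8 * c₁ ^ 2 * A₂ ^ 3 ≤ 0 := by
    nlinarith [hrel2, mul_pos hA₁pos hA₂pos, sq_nonneg c₁, sq_nonneg c₂,
      mul_nonneg (mul_nonneg (sq_nonneg c₁) (pow_pos hA₂pos 3).le) (sub_nonneg.mpr hle),
      mul_nonneg (mul_nonneg (mul_nonneg hA₁pos.le hA₂pos.le) (by nlinarith : (0:ℝ) ≤ A₁ + A₂))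
        (sub_nonneg.mpr hle),
      mul_pos (mul_pos hA₁pos hA₂pos) (mul_pos hA₁pos hA₂pos)]
  exact div_nonpos_of_nonpos_of_nonneg hN (by positivity)
end

section
/- With ψ(x) = |x−y₂|⁻² − |x−y₁|⁻² − a and ψ(x) = 0, for any unit vector τ with τ·∇ψ(x)=0 the identity ∂²_{ττ}ψ(x) = 2/|x−y₁|⁴ − 2(1/|x−y₁|² + a)² − (8((x−y₁)·τ)²/|x−y₁|⁶)·(a/(1/|x−y₁|² + a)) holds. -/
open Filter Topology

private lemma quad_hasDerivAt (c s t : ℝ) :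
    HasDerivAt (fun t : ℝ => c + 2*s*t + t^2) (2*s + 2*t) t := by
  have h : HasDerivAt (fun t : ℝ => c + 2*s*t + t^2)
      (0 + 2*s*1 + ((2:ℕ):ℝ)*t^(2-1)) t :=
    ((hasDerivAt_const t c).add ((hasDerivAt_id t).const_mul (2*s))).add (hasDerivAt_pow 2 t)
  have : (0 + 2*s*1 + ((2:ℕ):ℝ)*t^(2-1)) = 2*s + 2*t := by push_cast; ring
  rwa [this] at h

private lemma quad_inv_hasDerivAt (c s : ℝ) {t : ℝ} (ht : c + 2*s*t + t^2 ≠ 0) :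
    HasDerivAt (fun t : ℝ => (c + 2*s*t + t^2)⁻¹)
      (-(2*s + 2*t) / (c + 2*s*t + t^2)^2) t :=
  (quad_hasDerivAt c s t).inv ht

private lemma key1 (c s : ℝ) (hc : c ≠ 0) :
    HasDerivAt (fun t : ℝ => -(2*s + 2*t) / (c + 2*s*t + t^2)^2)
      (-2/c^2 + 8*s^2/c^3) 0 := by
  have hA : HasDerivAt (fun t : ℝ => -(2*s + 2*t)) (-2) 0 := by
    exact (((hasDerivAt_const (0:ℝ) (2*s)).add ((hasDerivAt_id (0:ℝ)).const_mul 2)).neg).congr_deriv (by norm_num)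
  have hq := quad_hasDerivAt c s 0
  have hq2 := hq.pow 2
  have hne : (c + 2*s*0 + 0^2)^2 ≠ 0 := by
    simpa using pow_ne_zero 2 hc
  have hinv := hq2.inv hne
  have H := hA.mul hinv
  have hfun : (fun t : ℝ => -(2*s + 2*t) / (c + 2*s*t + t^2)^2)
      = fun t : ℝ => -(2*s + 2*t) * ((c + 2*s*t + t^2)^2)⁻¹ := by
    funext t; rw [div_eq_mul_inv]
  rw [hfun]
  refine H.congr_deriv ?_
  simp only [Pi.pow_apply, Pi.inv_apply, Pi.mul_apply, mul_zero, add_zero, pow_two, mul_one, pow_one]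
  field_simp
  ring

private lemma key (c1 c2 s1 s2 a : ℝ) (h1 : c1 ≠ 0) (h2 : c2 ≠ 0) :
    deriv (deriv (fun t : ℝ =>
      (c2 + 2*s2*t + t^2)⁻¹ - (c1 + 2*s1*t + t^2)⁻¹ - a)) 0
    = (-2/c2^2 + 8*s2^2/c2^3) - (-2/c1^2 + 8*s1^2/c1^3) := by
  have hcont1 : Continuous (fun t : ℝ => c1 + 2*s1*t + t^2) := by continuity
  have hcont2 : Continuous (fun t : ℝ => c2 + 2*s2*t + t^2) := by continuity
  have h1' : ∀ᶠ t in 𝓝 (0:ℝ), c1 + 2*s1*t + t^2 ≠ 0 :=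
    hcont1.continuousAt.eventually_ne (by simpa using h1)
  have h2' : ∀ᶠ t in 𝓝 (0:ℝ), c2 + 2*s2*t + t^2 ≠ 0 :=
    hcont2.continuousAt.eventually_ne (by simpa using h2)
  have hEv : deriv (fun t : ℝ =>
      (c2 + 2*s2*t + t^2)⁻¹ - (c1 + 2*s1*t + t^2)⁻¹ - a)
      =ᶠ[𝓝 (0:ℝ)] fun t : ℝ =>
        -(2*s2 + 2*t) / (c2 + 2*s2*t + t^2)^2 -
        -(2*s1 + 2*t) / (c1 + 2*s1*t + t^2)^2 := by
    filter_upwards [h1', h2'] with t ht1 ht2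
    exact (((quad_inv_hasDerivAt c2 s2 ht2).sub (quad_inv_hasDerivAt c1 s1 ht1)).sub_const a).deriv
  rw [hEv.deriv_eq]
  exact ((key1 c2 s2 h2).sub (key1 c1 s1 h1)).deriv

/-- The explicit identity for the tangential second derivative of
ψ(x) = |x−y₂|⁻² − |x−y₁|⁻² − a on its zero level set. -/
theorem sublevel_tangential_hessian_identity {d : ℕ}
    (y₁ y₂ x τ : EuclideanSpace ℝ (Fin d)) (a : ℝ)
    (hy : y₁ ≠ y₂) (hx1 : x ≠ y₁) (hx2 : x ≠ y₂)
    (hψ0 : (‖x - y₂‖ ^ 2)⁻¹ = (‖x - y₁‖ ^ 2)⁻¹ + a)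
    (hpos : 0 < (‖x - y₁‖ ^ 2)⁻¹ + a)
    (hτ : ‖τ‖ = 1)
    (horth : (inner ℝ τ ((2 / ‖x - y₁‖ ^ 4) • (x - y₁) - (2 / ‖x - y₂‖ ^ 4) • (x - y₂)) : ℝ) = 0) :
    deriv (deriv (fun t : ℝ =>
      (‖x + t • τ - y₂‖ ^ 2)⁻¹ - (‖x + t • τ - y₁‖ ^ 2)⁻¹ - a)) 0 =
      2 / ‖x - y₁‖ ^ 4 - 2 * ((‖x - y₁‖ ^ 2)⁻¹ + a) ^ 2 -
        (8 * (inner ℝ (x - y₁) τ : ℝ) ^ 2 / ‖x - y₁‖ ^ 6) *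
          (a / ((‖x - y₁‖ ^ 2)⁻¹ + a)) := by
  set c1 : ℝ := ‖x - y₁‖ ^ 2 with hc1def
  set c2 : ℝ := ‖x - y₂‖ ^ 2 with hc2def
  set s1 : ℝ := (inner ℝ (x - y₁) τ : ℝ) with hs1def
  set s2 : ℝ := (inner ℝ (x - y₂) τ : ℝ) with hs2def
  have hn1 : ‖x - y₁‖ ≠ 0 := norm_ne_zero_iff.mpr (sub_ne_zero.mpr hx1)
  have hn2 : ‖x - y₂‖ ≠ 0 := norm_ne_zero_iff.mpr (sub_ne_zero.mpr hx2)
  have hc1 : c1 ≠ 0 := pow_ne_zero 2 hn1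
  have hc2 : c2 ≠ 0 := pow_ne_zero 2 hn2
  have hexp : ∀ (y : EuclideanSpace ℝ (Fin d)) (t : ℝ),
      ‖x + t • τ - y‖ ^ 2 = ‖x - y‖ ^ 2 + 2*(inner ℝ (x - y) τ : ℝ)*t + t^2 := by
    intro y t
    have h : x + t • τ - y = (x - y) + t • τ := by abel
    rw [h, norm_add_sq_real, real_inner_smul_right, norm_smul, Real.norm_eq_abs, hτ]
    rw [mul_one, sq_abs]
    ring
  have hfun : (fun t : ℝ => (‖x + t • τ - y₂‖ ^ 2)⁻¹ - (‖x + t • τ - y₁‖ ^ 2)⁻¹ - a)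
      = fun t : ℝ => (c2 + 2*s2*t + t^2)⁻¹ - (c1 + 2*s1*t + t^2)⁻¹ - a := by
    funext t; rw [hexp y₂ t, hexp y₁ t]
  rw [hfun, key c1 c2 s1 s2 a hc1 hc2]
  -- algebraic facts
  have h4 : ‖x - y₁‖ ^ 4 = c1^2 := by rw [hc1def]; ring
  have h6 : ‖x - y₁‖ ^ 6 = c1^3 := by rw [hc1def]; ring
  have h4' : ‖x - y₂‖ ^ 4 = c2^2 := by rw [hc2def]; ring
  have horth' : 2/c1^2 * s1 - 2/c2^2 * s2 = 0 := by
    have := horth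
    rw [inner_sub_right, real_inner_smul_right, real_inner_smul_right,
      real_inner_comm (x - y₁) τ, real_inner_comm (x - y₂) τ, h4, h4',
      ← hs1def, ← hs2def] at this
    linarith
  have hs2eq : s2 = s1 * c2^2 / c1^2 := by
    field_simp at horth' ⊢
    linarith
  have ha : a = c2⁻¹ - c1⁻¹ := by linarith [hψ0]
  have hv : c1⁻¹ + a ≠ 0 := ne_of_gt hpos
  rw [h4, h6, hs2eq, ha]
  have hv' : (c1⁻¹ + (c2⁻¹ - c1⁻¹)) = c2⁻¹ := by ring
  rw [hv']
  field_simp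
  ring
end

section
/- For ψ(x) = |x−y₂|⁻² − |x−y₁|⁻² − a with a < 0, at any point x of the level set {ψ = 0} and any unit vector τ orthogonal to ∇ψ(x) with (x−y₁)·τ ≠ 0 or a strict case, one has ∂²_{ττ}ψ(x) > 0. -/
open Filter Topology

private lemma hasDerivAt_q (c r t : ℝ) :
    HasDerivAt (fun s : ℝ => r ^ 2 + 2 * c * s + s ^ 2) (2 * c + 2 * t) t := by
  have h1 : HasDerivAt (fun s : ℝ => r ^ 2 + 2 * c * s) (2 * c) t := by
    simpa using ((hasDerivAt_id t).const_mul (2 * c)).const_add (r ^ 2)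
  have h2 : HasDerivAt (fun s : ℝ => s ^ 2) (2 * t) t := by
    simpa using hasDerivAt_pow 2 t
  exact h1.add h2

private lemma alg_pos (u v c₁ c₂ : ℝ) (hu : 0 < u) (hv : 0 < v) (huv : u < v)
    (hcc : c₁ * v ^ 2 = c₂ * u ^ 2) :
    0 < (-2 * v ^ 2 - -(2 * c₂ + 2 * 0) * (2 * v ^ 1 * (2 * c₂ + 2 * 0))) / (v ^ 2) ^ 2 -
      (-2 * u ^ 2 - -(2 * c₁ + 2 * 0) * (2 * u ^ 1 * (2 * c₁ + 2 * 0))) / (u ^ 2) ^ 2 := by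
  have hune : u ≠ 0 := ne_of_gt hu
  have hvne : v ≠ 0 := ne_of_gt hv
  have hc2eq : c₂ = c₁ * v ^ 2 / u ^ 2 := by
    field_simp
    linarith [hcc]
  have hA : (-2 * v ^ 2 - -(2 * c₂ + 2 * 0) * (2 * v ^ 1 * (2 * c₂ + 2 * 0))) / (v ^ 2) ^ 2 -
      (-2 * u ^ 2 - -(2 * c₁ + 2 * 0) * (2 * u ^ 1 * (2 * c₁ + 2 * 0))) / (u ^ 2) ^ 2
      = 2 * (v ^ 2 - u ^ 2) / (u ^ 2 * v ^ 2) + 8 * c₁ ^ 2 * (v - u) / u ^ 4 := by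
    rw [hc2eq]
    field_simp
    ring
  rw [hA]
  have ht1 : 0 < 2 * (v ^ 2 - u ^ 2) / (u ^ 2 * v ^ 2) :=
    div_pos (by nlinarith) (by positivity)
  have ht2 : 0 ≤ 8 * c₁ ^ 2 * (v - u) / u ^ 4 :=
    div_nonneg (by nlinarith [sq_nonneg c₁]) (by positivity)
  linarith

/-- For ψ(x) = |x−y₂|⁻² − |x−y₁|⁻² − a with a < 0, at any point of {ψ = 0},
the second derivative of ψ in a unit direction τ orthogonal to ∇ψ(x) is positive. -/
theorem sublevel_tangential_hessian_pos {d : ℕ}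
    (y₁ y₂ x τ : EuclideanSpace ℝ (Fin d)) (a : ℝ)
    (hy : y₁ ≠ y₂) (ha : a < 0) (hx1 : x ≠ y₁) (hx2 : x ≠ y₂)
    (hψ0 : (‖x - y₂‖ ^ 2)⁻¹ - (‖x - y₁‖ ^ 2)⁻¹ = a)
    (hτ : ‖τ‖ = 1)
    (horth : (inner ℝ τ ((2 / ‖x - y₁‖ ^ 4) • (x - y₁) - (2 / ‖x - y₂‖ ^ 4) • (x - y₂)) : ℝ) = 0) :
    0 < deriv (deriv (fun t : ℝ =>
      (‖x + t • τ - y₂‖ ^ 2)⁻¹ - (‖x + t • τ - y₁‖ ^ 2)⁻¹ - a)) 0 := by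
  set r₁ : ℝ := ‖x - y₁‖ with hr₁
  set r₂ : ℝ := ‖x - y₂‖ with hr₂
  have hr₁pos : 0 < r₁ := by
    simpa [hr₁] using norm_pos_iff.mpr (sub_ne_zero.mpr hx1)
  have hr₂pos : 0 < r₂ := by
    simpa [hr₂] using norm_pos_iff.mpr (sub_ne_zero.mpr hx2)
  set c₁ : ℝ := inner ℝ (x - y₁) τ with hc₁
  set c₂ : ℝ := inner ℝ (x - y₂) τ with hc₂
  -- expansion of the squared norms
  have key : ∀ (y : EuclideanSpace ℝ (Fin d)) (t : ℝ),
      ‖x + t • τ - y‖ ^ 2 = ‖x - y‖ ^ 2 + 2 * (inner ℝ (x - y) τ : ℝ) * t + t ^ 2 := by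
    intro y t
    have h : x + t • τ - y = (x - y) + t • τ := by abel
    rw [h, norm_add_sq_real, real_inner_smul_right, norm_smul]
    simp [hτ, mul_pow, sq_abs]
    ring
  -- rewrite the function
  have hfun : (fun t : ℝ =>
      (‖x + t • τ - y₂‖ ^ 2)⁻¹ - (‖x + t • τ - y₁‖ ^ 2)⁻¹ - a)
      = fun t : ℝ => (r₂ ^ 2 + 2 * c₂ * t + t ^ 2)⁻¹
          - (r₁ ^ 2 + 2 * c₁ * t + t ^ 2)⁻¹ - a := by
    funext t
    rw [key y₂ t, key y₁ t]
  rw [hfun]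
  -- neighborhood where denominators are nonzero
  set q₁ : ℝ → ℝ := fun t => r₁ ^ 2 + 2 * c₁ * t + t ^ 2 with hq₁
  set q₂ : ℝ → ℝ := fun t => r₂ ^ 2 + 2 * c₂ * t + t ^ 2 with hq₂
  have hq₁0 : q₁ 0 = r₁ ^ 2 := by simp [hq₁]
  have hq₂0 : q₂ 0 = r₂ ^ 2 := by simp [hq₂]
  have hq₁0ne : q₁ 0 ≠ 0 := by rw [hq₁0]; positivity
  have hq₂0ne : q₂ 0 ≠ 0 := by rw [hq₂0]; positivity
  have hcont₁ : ContinuousAt q₁ 0 := by fun_prop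
  have hcont₂ : ContinuousAt q₂ 0 := by fun_prop
  have hev : ∀ᶠ t in 𝓝 (0:ℝ), q₁ t ≠ 0 ∧ q₂ t ≠ 0 :=
    (hcont₁.eventually_ne hq₁0ne).and (hcont₂.eventually_ne hq₂0ne)
  -- first derivative
  have hde : deriv (fun t : ℝ => (q₂ t)⁻¹ - (q₁ t)⁻¹ - a)
      =ᶠ[𝓝 (0:ℝ)] fun t => -(2 * c₂ + 2 * t) / (q₂ t) ^ 2
          - (-(2 * c₁ + 2 * t) / (q₁ t) ^ 2) := by
    filter_upwards [hev] with t ht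
    have h2 := ((hasDerivAt_q c₂ r₂ t).inv ht.2)
    have h1 := ((hasDerivAt_q c₁ r₁ t).inv ht.1)
    exact ((h2.sub h1).sub_const a).deriv
  rw [hde.deriv_eq]
  -- second derivative at 0
  have hnum₂ : HasDerivAt (fun t : ℝ => -(2 * c₂ + 2 * t)) (-2) 0 := by
    have : HasDerivAt (fun t : ℝ => 2 * c₂ + 2 * t) 2 0 := by
      simpa using ((hasDerivAt_id (0:ℝ)).const_mul 2).const_add (2 * c₂)
    exact this.neg
  have hnum₁ : HasDerivAt (fun t : ℝ => -(2 * c₁ + 2 * t)) (-2) 0 := by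
    have : HasDerivAt (fun t : ℝ => 2 * c₁ + 2 * t) 2 0 := by
      simpa using ((hasDerivAt_id (0:ℝ)).const_mul 2).const_add (2 * c₁)
    exact this.neg
  have hden₂ : HasDerivAt (fun t : ℝ => (q₂ t) ^ 2) (2 * q₂ 0 ^ 1 * (2 * c₂ + 2 * 0)) 0 :=
    (hasDerivAt_q c₂ r₂ 0).pow 2
  have hden₁ : HasDerivAt (fun t : ℝ => (q₁ t) ^ 2) (2 * q₁ 0 ^ 1 * (2 * c₁ + 2 * 0)) 0 :=
    (hasDerivAt_q c₁ r₁ 0).pow 2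
  have hd2sq : (q₂ 0) ^ 2 ≠ 0 := pow_ne_zero _ hq₂0ne
  have hd1sq : (q₁ 0) ^ 2 ≠ 0 := pow_ne_zero _ hq₁0ne
  have h2 := (hnum₂.div hden₂ hd2sq)
  have h1 := (hnum₁.div hden₁ hd1sq)
  have hD : deriv (fun t => -(2 * c₂ + 2 * t) / q₂ t ^ 2 - -(2 * c₁ + 2 * t) / q₁ t ^ 2) 0 = _ := (h2.sub h1).deriv
  rw [hD, hq₁0, hq₂0]
  -- facts
  have hr12 : r₁ ^ 2 < r₂ ^ 2 := by
    have h1 : (r₂ ^ 2)⁻¹ < (r₁ ^ 2)⁻¹ := by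
      nlinarith [hψ0, ha, inv_pos.mpr (pow_pos hr₁pos 2), inv_pos.mpr (pow_pos hr₂pos 2)]
    have := (inv_lt_inv₀ (by positivity) (by positivity)).mp h1
    linarith
  have hcc : c₁ * (r₂ ^ 2) ^ 2 = c₂ * (r₁ ^ 2) ^ 2 := by
    have h := horth
    rw [inner_sub_right, real_inner_smul_right, real_inner_smul_right] at h
    rw [real_inner_comm] at hc₁
    rw [real_inner_comm] at hc₂
    rw [← hc₁, ← hc₂] at h
    have h4₁ : r₁ ^ 4 ≠ 0 := by positivity
    have h4₂ : r₂ ^ 4 ≠ 0 := by positivity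
    field_simp at h
    nlinarith [h]
  exact alg_pos (r₁ ^ 2) (r₂ ^ 2) c₁ c₂ (by positivity) (by positivity) hr12 hcc
end

section
/- Let ψ : ℝ^d → ℝ be C² with ∇ψ ≠ 0 on {ψ = 0}, and suppose that at every boundary point x ∈ {ψ = 0} the Hessian satisfies ∂²ψ(x)τ·τ > 0 for all nonzero τ with τ·∇ψ(x) = 0. If Ω = {ψ < 0} is bounded, nonempty, and connected, then Ω is convex. -/
open Set Filter Metric Topology

/-- At an interior local maximum of a C² function, the second derivative is nonpositive. -/
lemma aux_second_deriv_nonpos_of_isLocalMax {g : ℝ → ℝ} (hg : ContDiff ℝ 2 g) {t₀ : ℝ}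
    (hmax : IsLocalMax g t₀) : deriv (deriv g) t₀ ≤ 0 := by
  by_contra hL
  push_neg at hL
  have hg2 : ContDiff ℝ ((1 : WithTop ℕ∞) + 1) g := by
    rwa [(by norm_num : (1 : WithTop ℕ∞) + 1 = 2)]
  have hg1 : ContDiff ℝ 1 (deriv g) := (contDiff_succ_iff_deriv.mp hg2).2.2
  have hd : HasDerivAt (deriv g) (deriv (deriv g) t₀) t₀ :=
    ((hg1.differentiable one_ne_zero) t₀).hasDerivAt
  have hg'0 : deriv g t₀ = 0 := hmax.deriv_eq_zero
  have hslope : Tendsto (slope (deriv g) t₀) (𝓝[>] t₀) (𝓝 (deriv (deriv g) t₀)) :=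
    (hasDerivAt_iff_tendsto_slope.mp hd).mono_left
      (nhdsWithin_mono _ (fun x hx => ne_of_gt hx))
  have hev : ∀ᶠ t in 𝓝[>] t₀, 0 < deriv g t := by
    filter_upwards [hslope.eventually_const_lt hL, self_mem_nhdsWithin] with t hst ht
    have htpos : 0 < t - t₀ := sub_pos.mpr ht
    have hs : slope (deriv g) t₀ t = deriv g t / (t - t₀) := by
      rw [slope_def_field, hg'0, sub_zero]
    rw [hs] at hst
    by_contra hcon
    push_neg at hcon
    exact absurd hst (not_lt.mpr (div_nonpos_of_nonpos_of_nonneg hcon htpos.le))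
  obtain ⟨u, hu, hIoo⟩ := mem_nhdsGT_iff_exists_Ioo_subset.mp hev
  obtain ⟨ε, hε, hball⟩ := Metric.eventually_nhds_iff.mp hmax
  set c := min u (t₀ + ε) with hc
  have hct : t₀ < c := lt_min hu (by linarith)
  set p := (t₀ + c) / 2 with hp
  have hp1 : t₀ < p := by simp only [hp]; linarith
  have hp2 : p < c := by simp only [hp]; linarith
  have hmono : StrictMonoOn g (Icc t₀ p) := by
    apply strictMonoOn_of_deriv_pos (convex_Icc _ _) hg.continuous.continuousOn
    intro t ht
    rw [interior_Icc] at ht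
    exact hIoo ⟨ht.1, lt_of_lt_of_le (ht.2.trans hp2) (min_le_left _ _)⟩
  have hlt : g t₀ < g p :=
    hmono (left_mem_Icc.mpr hp1.le) (right_mem_Icc.mpr hp1.le) hp1
  have hle : g p ≤ g t₀ := by
    apply hball
    rw [Real.dist_eq, abs_of_pos (by linarith)]
    have : c ≤ t₀ + ε := min_le_right _ _
    linarith
  linarith

/-- Sufficiency direction of the level-set convexity criterion: if the Hessian of ψ is
strictly positive on tangent directions of {ψ = 0} and Ω = {ψ < 0} is bounded, nonempty
and connected, then Ω is convex. -/
theorem tangential_hessian_pos_implies_convex {d : ℕ}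
    (ψ : EuclideanSpace ℝ (Fin d) → ℝ) (hψ : ContDiff ℝ 2 ψ)
    (hgrad : ∀ x, ψ x = 0 → gradient ψ x ≠ 0)
    (hhess : ∀ x, ψ x = 0 → ∀ τ : EuclideanSpace ℝ (Fin d), τ ≠ 0 →
      (inner ℝ τ (gradient ψ x) : ℝ) = 0 →
        0 < deriv (deriv (fun t : ℝ => ψ (x + t • τ))) 0)
    (hbd : Bornology.IsBounded {x : EuclideanSpace ℝ (Fin d) | ψ x < 0})
    (hne : {x : EuclideanSpace ℝ (Fin d) | ψ x < 0}.Nonempty)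
    (hconn : IsConnected {x : EuclideanSpace ℝ (Fin d) | ψ x < 0}) :
    Convex ℝ {x : EuclideanSpace ℝ (Fin d) | ψ x < 0} := by
  have hψc : Continuous ψ := hψ.continuous
  have hΩo : IsOpen {x : EuclideanSpace ℝ (Fin d) | ψ x < 0} :=
    isOpen_lt hψc continuous_const
  -- Key step: if ψ ≤ 0 on a segment with endpoints in Ω, then ψ < 0 on the segment.
  have key : ∀ a b : EuclideanSpace ℝ (Fin d), ψ a < 0 → ψ b < 0 →
      (∀ t ∈ Set.Icc (0:ℝ) 1, ψ (a + t • (b - a)) ≤ 0) →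
      ∀ t ∈ Set.Icc (0:ℝ) 1, ψ (a + t • (b - a)) < 0 := by
    intro a b ha hb hle t ht
    by_contra hge
    have hz : ψ (a + t • (b - a)) = 0 := le_antisymm (hle t ht) (not_lt.mp hge)
    set τ := b - a with hτdef
    have hτ : τ ≠ 0 := by
      intro h0
      rw [h0, smul_zero, add_zero] at hz
      exact absurd hz (ne_of_lt ha)
    have ht0 : t ≠ 0 := by
      rintro rfl
      rw [zero_smul, add_zero] at hz
      exact absurd hz (ne_of_lt ha)
    have ht1 : t ≠ 1 := by
      rintro rfl
      rw [one_smul, hτdef, add_sub_cancel] at hz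
      exact absurd hz (ne_of_lt hb)
    have htIoo : t ∈ Set.Ioo (0:ℝ) 1 :=
      ⟨lt_of_le_of_ne ht.1 (Ne.symm ht0), lt_of_le_of_ne ht.2 ht1⟩
    set g : ℝ → ℝ := fun s => ψ (a + s • τ) with hgdef
    have hline : ∀ s : ℝ, HasDerivAt (fun s : ℝ => a + s • τ) τ s := fun s => by
      simpa using ((hasDerivAt_id s).smul_const τ).const_add a
    have hgd : ∀ s : ℝ, HasDerivAt g (fderiv ℝ ψ (a + s • τ) τ) s := fun s => by
      have hdiff : DifferentiableAt ℝ ψ (a + s • τ) :=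
        (hψ.differentiable two_ne_zero).differentiableAt
      exact (hdiff.hasFDerivAt.comp_hasDerivAt s (hline s))
    have hmax : IsLocalMax g t := by
      have hmem : Set.Icc (0:ℝ) 1 ∈ 𝓝 t := Icc_mem_nhds htIoo.1 htIoo.2
      filter_upwards [hmem] with s hs
      show g s ≤ g t
      calc g s ≤ 0 := hle s hs
        _ = g t := hz.symm
    have hderiv0 : fderiv ℝ ψ (a + t • τ) τ = 0 := by
      have h0 := hmax.deriv_eq_zero
      rwa [(hgd t).deriv] at h0
    have hinner : (inner ℝ τ (gradient ψ (a + t • τ)) : ℝ) = 0 := by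
      rw [real_inner_comm]
      have : (inner ℝ (gradient ψ (a + t • τ)) τ : ℝ) = fderiv ℝ ψ (a + t • τ) τ :=
        InnerProductSpace.toDual_symm_apply
      rw [this, hderiv0]
    have hpos := hhess (a + t • τ) hz τ hτ hinner
    have hshift : (fun s : ℝ => ψ ((a + t • τ) + s • τ)) = fun s => g (s + t) := by
      funext s
      simp only [hgdef]
      congr 1
      module
    rw [hshift] at hpos
    have h1 : deriv (fun s => g (s + t)) = fun s => deriv g (s + t) := by
      funext s
      exact deriv_comp_add_const g t s
    rw [h1, deriv_comp_add_const, zero_add] at hpos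
    have hgC2 : ContDiff ℝ 2 g := by
      have hlC : ContDiff ℝ 2 (fun s : ℝ => a + s • τ) :=
        contDiff_const.add (contDiff_id.smul contDiff_const)
      exact hψ.comp hlC
    exact absurd hpos (not_lt.mpr (aux_second_deriv_nonpos_of_isLocalMax hgC2 hmax))
  -- Open sets for the connectedness argument
  set U : Set (EuclideanSpace ℝ (Fin d) × EuclideanSpace ℝ (Fin d)) :=
    {p | ∀ t ∈ Set.Icc (0:ℝ) 1, ψ (p.1 + t • (p.2 - p.1)) < 0} with hUdef
  set V : Set (EuclideanSpace ℝ (Fin d) × EuclideanSpace ℝ (Fin d)) :=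
    {p | ∃ t ∈ Set.Icc (0:ℝ) 1, 0 < ψ (p.1 + t • (p.2 - p.1))} with hVdef
  have hUopen : IsOpen U := by
    rw [Metric.isOpen_iff]
    rintro ⟨a, b⟩ hab
    have hKc : IsCompact ((fun t : ℝ => a + t • (b - a)) '' Set.Icc 0 1) :=
      isCompact_Icc.image (continuous_const.add (continuous_id.smul continuous_const))
    have hKsub : (fun t : ℝ => a + t • (b - a)) '' Set.Icc 0 1 ⊆
        {x : EuclideanSpace ℝ (Fin d) | ψ x < 0} := by
      rintro x ⟨s, hs, rfl⟩
      exact hab s hs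
    obtain ⟨δ, hδ, hth⟩ := hKc.exists_thickening_subset_open hΩo hKsub
    refine ⟨δ, hδ, ?_⟩
    rintro ⟨a', b'⟩ hp t ht
    rw [Metric.mem_ball, Prod.dist_eq, max_lt_iff] at hp
    have hda : ‖a' - a‖ < δ := by rw [← dist_eq_norm]; exact hp.1
    have hdb : ‖b' - b‖ < δ := by rw [← dist_eq_norm]; exact hp.2
    have hmem : (a' + t • (b' - a')) ∈
        Metric.thickening δ ((fun t : ℝ => a + t • (b - a)) '' Set.Icc 0 1) := by
      rw [Metric.mem_thickening_iff]
      refine ⟨a + t • (b - a), ⟨t, ht, rfl⟩, ?_⟩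
      rw [dist_eq_norm]
      have heq : (a' + t • (b' - a')) - (a + t • (b - a)) =
          (1 - t) • (a' - a) + t • (b' - b) := by module
      rw [heq]
      have hM1 : ‖a' - a‖ ≤ max ‖a' - a‖ ‖b' - b‖ := le_max_left _ _
      have hM2 : ‖b' - b‖ ≤ max ‖a' - a‖ ‖b' - b‖ := le_max_right _ _
      calc ‖(1 - t) • (a' - a) + t • (b' - b)‖
          ≤ (1 - t) * ‖a' - a‖ + t * ‖b' - b‖ := by
            refine (norm_add_le _ _).trans ?_
            rw [norm_smul, norm_smul, Real.norm_eq_abs, Real.norm_eq_abs,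
              abs_of_nonneg (by linarith [ht.2]), abs_of_nonneg ht.1]
        _ ≤ max ‖a' - a‖ ‖b' - b‖ := by
            have h1 := mul_nonneg ht.1 (sub_nonneg.2 hM2)
            have h2 := mul_nonneg (sub_nonneg.2 ht.2) (sub_nonneg.2 hM1)
            nlinarith
        _ < δ := max_lt hda hdb
    exact hth hmem
  have hVopen : IsOpen V := by
    have hVeq : V = ⋃ t ∈ Set.Icc (0:ℝ) 1,
        {p : EuclideanSpace ℝ (Fin d) × EuclideanSpace ℝ (Fin d) |
          0 < ψ (p.1 + t • (p.2 - p.1))} := by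
      ext p
      simp [hVdef]
    rw [hVeq]
    refine isOpen_biUnion fun t _ => isOpen_lt continuous_const (hψc.comp ?_)
    exact continuous_fst.add ((continuous_snd.sub continuous_fst).const_smul t)
  have hcover : {x : EuclideanSpace ℝ (Fin d) | ψ x < 0} ×ˢ
      {x : EuclideanSpace ℝ (Fin d) | ψ x < 0} ⊆ U ∪ V := by
    rintro ⟨a, b⟩ ⟨ha, hb⟩
    by_cases h : ∃ t ∈ Set.Icc (0:ℝ) 1, 0 < ψ (a + t • (b - a))
    · exact Or.inr h
    · push_neg at h
      exact Or.inl (key a b ha hb h)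
  have hdisj : U ∩ V = ∅ := by
    rw [Set.eq_empty_iff_forall_notMem]
    rintro p ⟨hu, t, ht, hv⟩
    exact absurd (hu t ht) (not_lt.mpr hv.le)
  have hprodconn : IsPreconnected ({x : EuclideanSpace ℝ (Fin d) | ψ x < 0} ×ˢ
      {x : EuclideanSpace ℝ (Fin d) | ψ x < 0}) := (hconn.prod hconn).isPreconnected
  have hVempty : ({x : EuclideanSpace ℝ (Fin d) | ψ x < 0} ×ˢ
      {x : EuclideanSpace ℝ (Fin d) | ψ x < 0}) ∩ V = ∅ := by
    by_contra hcon
    obtain ⟨a0, ha0⟩ := hne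
    have haU : ((a0, a0) : EuclideanSpace ℝ (Fin d) × EuclideanSpace ℝ (Fin d)) ∈
        ({x : EuclideanSpace ℝ (Fin d) | ψ x < 0} ×ˢ
          {x : EuclideanSpace ℝ (Fin d) | ψ x < 0}) ∩ U := by
      refine ⟨⟨ha0, ha0⟩, fun t ht => ?_⟩
      simpa using ha0
    obtain ⟨r, hr⟩ := hprodconn U V hUopen hVopen hcover ⟨_, haU⟩
      (Set.nonempty_iff_ne_empty.mpr hcon)
    rw [hdisj] at hr
    exact hr.2
  intro a ha b hb t1 t2 ht1 ht2 hsum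
  have habU : ((a, b) : EuclideanSpace ℝ (Fin d) × EuclideanSpace ℝ (Fin d)) ∈ U := by
    rcases hcover (Set.mk_mem_prod ha hb) with h | h
    · exact h
    · exact absurd ⟨Set.mk_mem_prod ha hb, h⟩
        (Set.eq_empty_iff_forall_notMem.mp hVempty _)
  have ht2' : t2 ∈ Set.Icc (0:ℝ) 1 := ⟨ht2, by linarith⟩
  have hres := habU t2 ht2'
  have heq : a + t2 • (b - a) = t1 • a + t2 • b := by
    have h1 : t1 = 1 - t2 := by linarith
    rw [h1]
    module
  rwa [heq] at hres
end
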